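/- The route-based and path-based definitions of AMP separation coincide: in an AMP CG H with conditioning set Z (and determined set D(Z)), there exists a Z-open route between α and β (every triplex node of the route in D(Z), no non-triplex node of the route in D(Z)) if and only if there exists a Z-open path between α and β (every triplex node in D(Z) ∪ san_H(D(Z)), and no non-triplex node B in D(Z) unless B occurs in a subpath A − B − C with some parent of B not in D(Z)). -/

import Mathlib

/- Mixed graphs with directed and undirected edges. -/
structure MixedGraph (γ : Type*) where
  dir : γ → γ → Prop
  undir : γ → γ → Prop
  undir_symm : ∀ a b, undir a b → undir b a

namespace MixedGraph

variable {β : Type*} (G : MixedGraph β)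

/-- Two nodes are adjacent if joined by some edge. -/
def adj (a b : β) : Prop := G.dir a b ∨ G.dir b a ∨ G.undir a b

/-- The graph is simple: no loops and at most one edge between any pair. -/
def Simple : Prop :=
  (∀ a, ¬ G.dir a a) ∧ (∀ a, ¬ G.undir a a) ∧
  (∀ a b, G.dir a b → ¬ G.dir b a) ∧ (∀ a b, G.dir a b → ¬ G.undir a b)

/-- A semidirected cycle: a cycle whose first edge is directed and whose other
edges are directed or undirected (all pointing forwards). -/
def HasSemidirectedCycle : Prop :=
  ∃ (n : ℕ) (f : Fin (n + 2) → β),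
    f 0 = f (Fin.last (n + 1)) ∧ G.dir (f 0) (f 1) ∧
    ∀ i : Fin (n + 1), G.dir (f i.castSucc) (f i.succ) ∨ G.undir (f i.castSucc) (f i.succ)

/-- A chain graph: a simple graph with no semidirected cycle. -/
def IsChainGraph : Prop := G.Simple ∧ ¬ G.HasSemidirectedCycle

/-- A DAG: a chain graph with no undirected edges. -/
def IsDAG : Prop := G.IsChainGraph ∧ ∀ a b, ¬ G.undir a b

/-- Parents of a set of nodes. -/
def pa (X : Set β) : Set β := {v | v ∉ X ∧ ∃ x ∈ X, G.dir v x}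

/-- Strict ascendants of a set of nodes (strictly descending route to the set). -/
def san (W : Set β) : Set β := {v | v ∉ W ∧ ∃ w ∈ W, Relation.TransGen G.dir v w}

/-- B is a triplex node between A and C: A → B ← C, A → B − C, or A − B ← C. -/
def triplex (A B C : β) : Prop :=
  (G.dir A B ∧ G.dir C B) ∨ (G.dir A B ∧ G.undir B C) ∨ (G.undir A B ∧ G.dir C B)

/-- B is a non-triplex node between A and C. -/
def nontriplex (A B C : β) : Prop :=
  G.adj A B ∧ G.adj B C ∧ ¬ G.triplex A B C

/-- A route: a nonempty sequence of consecutively adjacent nodes. -/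
def IsRoute (l : List β) : Prop := l ≠ [] ∧ l.Chain' G.adj

/-- A path that is open given the determined set `D` (AMP path-based semantics). -/
def AMPOpenPath (D : Set β) (l : List β) : Prop :=
  G.IsRoute l ∧ l.Nodup ∧
  (∀ A B C, [A, B, C] <:+: l → G.triplex A B C → B ∈ D ∪ G.san D) ∧
  (∀ A B C, [A, B, C] <:+: l → G.nontriplex A B C → B ∈ D →
    (G.undir A B ∧ G.undir B C ∧ ∃ p ∈ G.pa {B}, p ∉ D))

/-- A route that is open given the determined set `D` (AMP route-based semantics). -/
def AMPOpenRoute (D : Set β) (l : List β) : Prop :=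
  G.IsRoute l ∧
  (∀ A B C, [A, B, C] <:+: l → G.triplex A B C → B ∈ D) ∧
  (∀ A B C, [A, B, C] <:+: l → G.nontriplex A B C → B ∉ D)

/-- AMP separation (path-based) of X and Y given determined set D. -/
def AMPSep (D X Y : Set β) : Prop :=
  ∀ (l : List β) (x y : β), x ∈ X → y ∈ Y → l.head? = some x → l.getLast? = some y →
    ¬ G.AMPOpenPath D l

/-- AMP separation (route-based) of X and Y given determined set D. -/
def AMPSepRoute (D X Y : Set β) : Prop :=
  ∀ (l : List β) (x y : β), x ∈ X → y ∈ Y → l.head? = some x → l.getLast? = some y →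
    ¬ G.AMPOpenRoute D l

/-- `s` is a collider section of the route `l`: a maximal undirected subroute of `l`
entered by arrowheads at both ends. -/
def IsColliderSection (l s : List β) : Prop :=
  s ≠ [] ∧ List.Chain' G.undir s ∧
  ∃ pre post A C, l = pre ++ s ++ post ∧
    pre.getLast? = some A ∧ post.head? = some C ∧
    (∀ b, s.head? = some b → G.dir A b) ∧ (∀ b, s.getLast? = some b → G.dir C b) ∧
    (∀ a b, pre.getLast? = some a → s.head? = some b → ¬ G.undir a b) ∧
    (∀ a b, s.getLast? = some a → post.head? = some b → ¬ G.undir a b)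

/-- `s` is a non-collider section of the route `l`: a maximal undirected subroute of `l`
not entered by arrowheads at both ends. -/
def IsNonColliderSection (l s : List β) : Prop :=
  s ≠ [] ∧ List.Chain' G.undir s ∧
  ∃ pre post, l = pre ++ s ++ post ∧
    (∀ a b, pre.getLast? = some a → s.head? = some b → ¬ G.undir a b) ∧
    (∀ a b, s.getLast? = some a → post.head? = some b → ¬ G.undir a b) ∧
    ¬ ((∃ A, pre.getLast? = some A ∧ ∀ b, s.head? = some b → G.dir A b) ∧
       (∃ C, post.head? = some C ∧ ∀ b, s.getLast? = some b → G.dir C b))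

/-- A route that is open given the determined set `D` (LWF semantics). -/
def LWFOpenRoute (D : Set β) (l : List β) : Prop :=
  G.IsRoute l ∧
  (∀ s, G.IsColliderSection l s → ∃ x ∈ s, x ∈ D) ∧
  (∀ s, G.IsNonColliderSection l s → ∀ x ∈ s, x ∉ D)

/-- LWF separation of X and Y given determined set D. -/
def LWFSep (D X Y : Set β) : Prop :=
  ∀ (l : List β) (x y : β), x ∈ X → y ∈ Y → l.head? = some x → l.getLast? = some y →
    ¬ G.LWFOpenRoute D l

/-- Closure of Z under a set `det` of deterministic relationships: `(S, a) ∈ det`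
means that `a` is a function of `S`. -/
inductive Determined (det : Set (Set β × β)) (Z : Set β) : β → Prop
  | base : ∀ a, a ∈ Z → Determined det Z a
  | step : ∀ (S : Set β) (a : β), (S, a) ∈ det → (∀ b ∈ S, Determined det Z b) →
      Determined det Z a

/-- The set D(Z) of nodes determined by Z. -/
def DSet (det : Set (Set β × β)) (Z : Set β) : Set β := {a | Determined det Z a}

end MixedGraph

section EAMP

variable {α : Type*}

/-- Directed edges of the EAMP CG: `inl` nodes are the original nodes,
`inr` nodes are the error nodes. -/
def eampDir (G : MixedGraph α) : (α ⊕ α) → (α ⊕ α) → Prop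
  | Sum.inl x, Sum.inl y => G.dir x y
  | Sum.inr x, Sum.inl y => x = y
  | _, _ => False

/-- Undirected edges of the EAMP CG: `ε^A − ε^B` for each `A − B` of G. -/
def eampUndir (G : MixedGraph α) : (α ⊕ α) → (α ⊕ α) → Prop
  | Sum.inr x, Sum.inr y => G.undir x y
  | _, _ => False

/-- The EAMP CG G' of an AMP CG G: add `ε^A → A` for each node A and replace
each undirected edge `A − B` by `ε^A − ε^B`. -/
def eamp (G : MixedGraph α) : MixedGraph (α ⊕ α) where
  dir := eampDir G
  undir := eampUndir G
  undir_symm := by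
    rintro (x | x) (y | y) h <;>
      simp only [eampUndir] at h ⊢ <;>
      first
        | exact h.elim
        | exact G.undir_symm _ _ h

/-- The parents of A in G, embedded as nodes of the EAMP CG. -/
def eampPa (G : MixedGraph α) (A : α) : Set (α ⊕ α) := {x | ∃ B, G.dir B A ∧ x = Sum.inl B}

/-- The deterministic relationships of the EAMP CG: each A is a function of
`pa_G(A) ∪ {ε^A}`, and each `ε^A` is a function of `pa_G(A) ∪ {A}`. -/
def eampDet (G : MixedGraph α) : Set (Set (α ⊕ α) × (α ⊕ α)) :=
  {p | (∃ A, p = (eampPa G A ∪ {Sum.inr A}, Sum.inl A)) ∨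
       (∃ A, p = (eampPa G A ∪ {Sum.inl A}, Sum.inr A))}

/-- Marginalize the node B out of G: add `A → C` for every pair `A → B`, `B → C`,
then delete B together with all edges it participates in. -/
def marg {β : Type*} (G : MixedGraph β) (B : β) : MixedGraph β where
  dir a c := a ≠ B ∧ c ≠ B ∧ (G.dir a c ∨ (G.dir a B ∧ G.dir B c))
  undir a c := a ≠ B ∧ c ≠ B ∧ G.undir a c
  undir_symm := by
    rintro a c ⟨h1, h2, h3⟩
    exact ⟨h2, h1, G.undir_symm _ _ h3⟩

/-- Marginalize a list of nodes out of G, one at a time. -/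
def margList {β : Type*} (G : MixedGraph β) (L : List β) : MixedGraph β := L.foldl marg G

/-- Directed edges of the DAG G'': those of G' among `V ∪ ε`, plus
`ε^A → S_{ε^Aε^B} ← ε^B` for each undirected edge `ε^A − ε^B` of G'. -/
def dagDir (G : MixedGraph α) : ((α ⊕ α) ⊕ Sym2 α) → ((α ⊕ α) ⊕ Sym2 α) → Prop
  | Sum.inl x, Sum.inl y => (eamp G).dir x y
  | Sum.inl (Sum.inr x), Sum.inr s => ∃ y, G.undir x y ∧ s = s(x, y)
  | _, _ => False

/-- The DAG G'' obtained from G' by replacing each `ε^A − ε^B` with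
`ε^A → S_{ε^Aε^B} ← ε^B`, where the selection nodes are fresh. -/
def dagOf (G : MixedGraph α) : MixedGraph ((α ⊕ α) ⊕ Sym2 α) where
  dir := dagDir G
  undir _ _ := False
  undir_symm := by intro a b h; exact h.elim

/-- The set S of selection nodes of G''. -/
def selNodes (G : MixedGraph α) : Set ((α ⊕ α) ⊕ Sym2 α) :=
  {v | ∃ x y, G.undir x y ∧ v = Sum.inr s(x, y)}

/-- The deterministic relationships of G'' (the same as those of G'). -/
def dagDet (G : MixedGraph α) : Set (Set ((α ⊕ α) ⊕ Sym2 α) × ((α ⊕ α) ⊕ Sym2 α)) :=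
  {p | ∃ q ∈ eampDet G, p = (Sum.inl '' q.1, Sum.inl q.2)}

/-- Structural characterization of EAMP CGs over `W ∪ ε`: a chain graph whose
undirected edges join only error nodes and whose error nodes have no incoming
directed edges. -/
def IsEAMPStruct (G : MixedGraph (α ⊕ α)) : Prop :=
  G.IsChainGraph ∧
  (∀ a b, G.undir a b → (∃ x, a = Sum.inr x) ∧ ∃ y, b = Sum.inr y) ∧
  (∀ a x, ¬ G.dir a (Sum.inr x))

/-- K is a connectivity component: a maximal set connected by undirected paths. -/
def IsConnComp {β : Type*} (G : MixedGraph β) (K : Set β) : Prop :=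
  ∃ a, K = {b | Relation.ReflTransGen G.undir a b}

end EAMP

namespace MixedGraph
variable {β : Type*} {H : MixedGraph β} {D : Set β}

lemma not_triplex_out (hs : H.Simple) {X Y Z : β} (h : H.dir Y Z) : ¬ H.triplex X Y Z := by
  rintro (⟨h1, h2⟩ | ⟨h1, h2⟩ | ⟨h1, h2⟩)
  · exact hs.2.2.1 _ _ h h2
  · exact hs.2.2.2 _ _ h h2
  · exact hs.2.2.1 _ _ h h2

lemma not_triplex_in (hs : H.Simple) {X Y Z : β} (h : H.dir Y X) : ¬ H.triplex X Y Z := by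
  rintro (⟨h1, h2⟩ | ⟨h1, h2⟩ | ⟨h1, h2⟩)
  · exact hs.2.2.1 _ _ h h1
  · exact hs.2.2.1 _ _ h h1
  · exact hs.2.2.2 _ _ h (H.undir_symm _ _ h1)

lemma triplex_comm {A B C : β} (h : H.triplex A B C) : H.triplex C B A := by
  rcases h with ⟨h1, h2⟩ | ⟨h1, h2⟩ | ⟨h1, h2⟩
  · exact Or.inl ⟨h2, h1⟩
  · exact Or.inr (Or.inr ⟨H.undir_symm _ _ h2, h1⟩)
  · exact Or.inr (Or.inl ⟨h2, H.undir_symm _ _ h1⟩)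

lemma adj_symm {a b : β} (h : H.adj a b) : H.adj b a := by
  rcases h with h | h | h
  · exact Or.inr (Or.inl h)
  · exact Or.inl h
  · exact Or.inr (Or.inr (H.undir_symm _ _ h))

/-- Path-style openness conditions, without the nodup requirement. -/
def POpen (H : MixedGraph β) (D : Set β) (l : List β) : Prop :=
  l.Chain' H.adj ∧
  (∀ A B C, [A,B,C] <:+: l → H.triplex A B C → B ∈ D ∪ H.san D) ∧
  (∀ A B C, [A,B,C] <:+: l → H.nontriplex A B C → B ∈ D →
     H.undir A B ∧ H.undir B C ∧ ∃ p ∈ H.pa {B}, p ∉ D)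

/-- Route-style openness conditions. -/
def RConds (H : MixedGraph β) (D : Set β) (l : List β) : Prop :=
  (∀ A B C, [A,B,C] <:+: l → H.triplex A B C → B ∈ D) ∧
  (∀ A B C, [A,B,C] <:+: l → H.nontriplex A B C → B ∉ D)

lemma infix3_append {A B C : β} : ∀ {xs ys : List β}, [A,B,C] <:+: xs ++ ys →
    [A,B,C] <:+: xs ∨ [A,B,C] <:+: ys ∨
    ((∃ u, xs = u ++ [A,B]) ∧ ∃ t, ys = C :: t) ∨
    ((∃ u, xs = u ++ [A]) ∧ ∃ t, ys = B :: C :: t) := by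
  intro xs
  induction xs with
  | nil => intro ys h; exact Or.inr (Or.inl h)
  | cons x xs ih =>
    intro ys h
    rw [List.cons_append, List.infix_cons_iff] at h
    rcases h with h | h
    · obtain ⟨rfl, h2⟩ := List.cons_prefix_cons.mp h
      cases xs with
      | nil =>
        simp only [List.nil_append] at h2
        obtain ⟨t, rfl⟩ := h2
        exact Or.inr (Or.inr (Or.inr ⟨⟨[], rfl⟩, t, rfl⟩))
      | cons b xs' =>
        rw [List.cons_append] at h2
        obtain ⟨rfl, h3⟩ := List.cons_prefix_cons.mp h2
        cases xs' with
        | nil =>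
          simp only [List.nil_append] at h3
          obtain ⟨t, rfl⟩ := h3
          exact Or.inr (Or.inr (Or.inl ⟨⟨[], rfl⟩, t, rfl⟩))
        | cons c xs'' =>
          rw [List.cons_append] at h3
          obtain ⟨rfl, _⟩ := List.cons_prefix_cons.mp h3
          exact Or.inl ⟨[], xs'', rfl⟩
    · rcases ih h with h | h | ⟨⟨u, hu⟩, ht⟩ | ⟨⟨u, hu⟩, ht⟩
      · obtain ⟨u, t, hut⟩ := h
        exact Or.inl ⟨x :: u, t, by rw [← hut]; simp⟩
      · exact Or.inr (Or.inl h)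
      · exact Or.inr (Or.inr (Or.inl ⟨⟨x :: u, by rw [hu, List.cons_append]⟩, ht⟩))
      · exact Or.inr (Or.inr (Or.inr ⟨⟨x :: u, by rw [hu, List.cons_append]⟩, ht⟩))

lemma POpen.reverse {l : List β} (h : POpen H D l) : POpen H D l.reverse := by
  obtain ⟨hch, htri, hnon⟩ := h
  have hrev : ∀ A B C : β, [A,B,C] <:+: l.reverse → [C,B,A] <:+: l := by
    intro A B C hinf
    rw [← List.reverse_infix]
    simpa using hinf
  refine ⟨?_, ?_, ?_⟩
  · show List.IsChain _ l.reverse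
    rw [List.isChain_reverse]
    exact hch.imp (fun a b hab => adj_symm hab)
  · intro A B C hinf htr
    exact htri C B A (hrev A B C hinf) (triplex_comm htr)
  · intro A B C hinf hnt hBD
    have hnt' : H.nontriplex C B A :=
      ⟨adj_symm hnt.2.1, adj_symm hnt.1, fun ht => hnt.2.2 (triplex_comm ht)⟩
    obtain ⟨u1, u2, hp⟩ := hnon C B A (hrev A B C hinf) hnt' hBD
    exact ⟨H.undir_symm _ _ u2, H.undir_symm _ _ u1, hp⟩

lemma descend (hs : H.Simple) {l : List β}
    (hch : l.Chain' H.adj)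
    (htri : ∀ A B C, [A,B,C] <:+: l → H.triplex A B C → B ∈ D ∪ H.san D) :
    ∀ (t : List β) (x y : β), (x :: y :: t) <:+ l → H.dir x y →
      (∃ c, Relation.ReflTransGen H.dir y c ∧ c ∈ D ∪ H.san D) ∨
      (∃ c prev, Relation.ReflTransGen H.dir y c ∧ H.dir prev c ∧ [prev, c] <:+ l) := by
  intro t
  induction t with
  | nil => intro x y hsuf hdir; exact Or.inr ⟨y, x, .refl, hdir, hsuf⟩
  | cons d t' ih =>
    intro x y hsuf hdir
    have hT : [x, y, d] <:+: l := by
      refine List.IsInfix.trans ?_ hsuf.isInfix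
      exact ⟨[], t', rfl⟩
    by_cases htr : H.triplex x y d
    · exact Or.inl ⟨y, .refl, htri x y d hT htr⟩
    · have hc3 := hch.infix hT
      have hadj : H.adj y d := (List.isChain_cons_cons.mp (List.isChain_cons_cons.mp hc3).2).1
      have hyd : H.dir y d := by
        rcases hadj with h | h | h
        · exact h
        · exact absurd (Or.inl ⟨hdir, h⟩) htr
        · exact absurd (Or.inr (Or.inl ⟨hdir, h⟩)) htr
      have hsuf' : (y :: d :: t') <:+ l := (List.suffix_cons x _).trans hsuf
      rcases ih y d hsuf' hyd with ⟨c, hc1, hc2⟩ | ⟨c, prev, hc1, hc2, hc3'⟩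
      · exact Or.inl ⟨c, Relation.ReflTransGen.head hyd hc1, hc2⟩
      · exact Or.inr ⟨c, prev, Relation.ReflTransGen.head hyd hc1, hc2, hc3'⟩

lemma case1 (hs : H.Simple) {p mid s : List β} {v A C : β}
    (hPO : POpen H D (p ++ [A] ++ v :: mid ++ v :: C :: s))
    (hmid : mid ≠ []) (hvD : v ∉ D) (hAv : H.dir A v) (hCv : H.dir C v ∨ H.undir v C) :
    v ∈ H.san D := by
  obtain ⟨w, mid', rfl⟩ := List.exists_cons_of_ne_nil hmid
  obtain ⟨hch, htri, hnon⟩ := hPO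
  have hT1 : [A, v, w] <:+: (p ++ [A] ++ v :: (w :: mid') ++ v :: C :: s) :=
    ⟨p, mid' ++ v :: C :: s, by simp⟩
  by_cases htr : H.triplex A v w
  · rcases htri A v w hT1 htr with h | h
    · exact absurd h hvD
    · exact h
  · have hadj : H.adj v w := (List.isChain_cons_cons.mp (List.isChain_cons_cons.mp (hch.infix hT1)).2).1
    have hvw : H.dir v w := by
      rcases hadj with h | h | h
      · exact h
      · exact absurd (Or.inl ⟨hAv, h⟩) htr
      · exact absurd (Or.inr (Or.inl ⟨hAv, h⟩)) htr
    -- truncated list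
    have hl₀l : p ++ [A] ++ v :: (w :: mid') ++ v :: C :: s
        = (p ++ [A] ++ v :: (w :: mid') ++ [v]) ++ C :: s := by simp
    have hch₀ : (p ++ [A] ++ v :: (w :: mid') ++ [v]).Chain' H.adj :=
      hch.prefix ⟨C :: s, hl₀l.symm⟩
    have htri₀ : ∀ X Y Z, [X,Y,Z] <:+: (p ++ [A] ++ v :: (w :: mid') ++ [v]) →
        H.triplex X Y Z → Y ∈ D ∪ H.san D := by
      intro X Y Z hXYZ htr'
      refine htri X Y Z (hXYZ.trans ?_) htr'
      rw [hl₀l]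
      exact (List.prefix_append _ (C :: s)).isInfix
    have hsufv : (v :: w :: (mid' ++ [v])) <:+ (p ++ [A] ++ v :: (w :: mid') ++ [v]) :=
      ⟨p ++ [A], by simp⟩
    rcases descend hs hch₀ htri₀ (mid' ++ [v]) v w hsufv hvw with
      ⟨c, hc1, hc2⟩ | ⟨c, prev, hc1, hc2, hc3⟩
    · refine ⟨hvD, ?_⟩
      have hvc : Relation.TransGen H.dir v c := Relation.TransGen.head' hvw hc1
      rcases hc2 with h | ⟨hcD, d, hdD, hcd⟩
      · exact ⟨c, h, hvc⟩
      · exact ⟨d, hdD, hvc.trans hcd⟩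
    · obtain ⟨q, hq⟩ := hc3
      have hcv : c = v := by
        have h1 : (p ++ [A] ++ v :: (w :: mid') ++ [v]).getLast? = some v :=
          List.getLast?_concat
        rw [← hq] at h1
        have h2 : (q ++ [prev, c]).getLast? = some c := by
          rw [show q ++ [prev, c] = (q ++ [prev]) ++ [c] by simp, List.getLast?_concat]
        rw [h2] at h1
        exact (Option.some_inj.mp h1)
      subst hcv
      have hT2 : [prev, c, C] <:+: (p ++ [A] ++ c :: (w :: mid') ++ c :: C :: s) :=
        ⟨q, s, by rw [hl₀l, ← hq]; simp⟩
      have htr2 : H.triplex prev c C := by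
        rcases hCv with h | h
        · exact Or.inl ⟨hc2, h⟩
        · exact Or.inr (Or.inl ⟨hc2, h⟩)
      rcases htri _ _ _ hT2 htr2 with h | h
      · exact absurd h hvD
      · exact h


lemma case2_left (hs : H.Simple) {p mid s : List β} {v A C : β}
    (hPO : POpen H D (p ++ [A] ++ v :: mid ++ v :: C :: s))
    (hmid : mid ≠ []) (hvD : v ∈ D) :
    H.dir A v ∨ (H.undir A v ∧ ∃ q ∈ H.pa {v}, q ∉ D) := by
  obtain ⟨w, mid', rfl⟩ := List.exists_cons_of_ne_nil hmid
  obtain ⟨z, rest, hzr⟩ := List.exists_cons_of_ne_nil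
    (show mid' ++ v :: C :: s ≠ [] by simp)
  obtain ⟨hch, htri, hnon⟩ := hPO
  have hT1 : [A, v, w] <:+: (p ++ [A] ++ v :: (w :: mid') ++ v :: C :: s) :=
    ⟨p, mid' ++ v :: C :: s, by simp⟩
  have hT3 : [v, w, z] <:+: (p ++ [A] ++ v :: (w :: mid') ++ v :: C :: s) := by
    refine ⟨p ++ [A], rest, ?_⟩
    rw [show p ++ [A] ++ v :: (w :: mid') ++ v :: C :: s
        = p ++ [A] ++ v :: w :: (mid' ++ v :: C :: s) by simp, hzr]
    simp
  have hchT1 := hch.infix hT1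
  have hadjAv : H.adj A v := (List.isChain_cons_cons.mp hchT1).1
  have hadjvw : H.adj v w := (List.isChain_cons_cons.mp (List.isChain_cons_cons.mp hchT1).2).1
  by_cases htr : H.triplex A v w
  · rcases htr with ⟨h1, h2⟩ | ⟨h1, h2⟩ | ⟨h1, h2⟩
    · exact Or.inl h1
    · exact Or.inl h1
    · -- undir A v, dir w v
      refine Or.inr ⟨h1, w, ⟨?_, v, rfl, h2⟩, ?_⟩
      · intro hwv
        rw [Set.mem_singleton_iff] at hwv
        exact hs.1 v (hwv ▸ h2)
      · -- w ∉ D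
        intro hwD
        have hchT3 := hch.infix hT3
        have hnt : H.nontriplex v w z := by
          refine ⟨(List.isChain_cons_cons.mp hchT3).1,
            (List.isChain_cons_cons.mp (List.isChain_cons_cons.mp hchT3).2).1, ?_⟩
          exact not_triplex_in hs h2
        have := hnon v w z hT3 hnt hwD
        exact hs.2.2.2 _ _ h2 (H.undir_symm _ _ this.1)
  · have hnt : H.nontriplex A v w := ⟨hadjAv, hadjvw, htr⟩
    obtain ⟨h1, h2, q, hq, hqD⟩ := hnon A v w hT1 hnt hvD
    exact Or.inr ⟨h1, q, hq, hqD⟩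

lemma case2_right (hs : H.Simple) {p mid s : List β} {v A C : β}
    (hPO : POpen H D (p ++ [A] ++ v :: mid ++ v :: C :: s))
    (hmid : mid ≠ []) (hvD : v ∈ D) :
    H.dir C v ∨ (H.undir v C ∧ ∃ q ∈ H.pa {v}, q ∉ D) := by
  have hrev := hPO.reverse
  have heq : (p ++ [A] ++ v :: mid ++ v :: C :: s).reverse
      = s.reverse ++ [C] ++ v :: mid.reverse ++ v :: A :: p.reverse := by simp
  rw [heq] at hrev
  rcases case2_left hs hrev (by simp [hmid]) hvD with h | ⟨h1, h2⟩
  · exact Or.inl h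
  · exact Or.inr ⟨H.undir_symm _ _ h1, h2⟩

lemma central (hs : H.Simple) {u mid s' : List β} {A v C : β}
    (hPO : POpen H D (u ++ [A] ++ v :: mid ++ v :: C :: s')) (hmid : mid ≠ []) :
    (H.triplex A v C → v ∈ D ∪ H.san D) ∧
    (H.nontriplex A v C → v ∈ D →
      H.undir A v ∧ H.undir v C ∧ ∃ q ∈ H.pa {v}, q ∉ D) := by
  constructor
  · intro htr
    by_cases hvD : v ∈ D
    · exact Or.inl hvD
    · refine Or.inr ?_
      rcases htr with ⟨h1, h2⟩ | ⟨h1, h2⟩ | ⟨h1, h2⟩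
      · exact case1 hs hPO hmid hvD h1 (Or.inl h2)
      · exact case1 hs hPO hmid hvD h1 (Or.inr h2)
      · have hrev := hPO.reverse
        have heq : (u ++ [A] ++ v :: mid ++ v :: C :: s').reverse
            = s'.reverse ++ [C] ++ v :: mid.reverse ++ v :: A :: u.reverse := by simp
        rw [heq] at hrev
        exact case1 hs hrev (by simp [hmid]) hvD h2 (Or.inr (H.undir_symm _ _ h1))
  · intro hnt hvD
    rcases case2_left hs hPO hmid hvD with hA | ⟨hA, hq⟩
    · rcases case2_right hs hPO hmid hvD with hC | ⟨hC, _⟩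
      · exact absurd (Or.inl ⟨hA, hC⟩) hnt.2.2
      · exact absurd (Or.inr (Or.inl ⟨hA, hC⟩)) hnt.2.2
    · rcases case2_right hs hPO hmid hvD with hC | ⟨hC, hq2⟩
      · exact absurd (Or.inr (Or.inr ⟨hA, hC⟩)) hnt.2.2
      · exact ⟨hA, hC, hq⟩

lemma dup_decomp : ∀ {l : List β}, ¬ l.Nodup →
    ∃ (p : List β) (v : β) (mid s : List β), l = p ++ v :: mid ++ v :: s := by
  intro l
  induction l with
  | nil => intro h; exact absurd List.nodup_nil h
  | cons x xs ih =>
    intro h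
    by_cases hx : x ∈ xs
    · obtain ⟨mid, s, rfl⟩ := List.append_of_mem hx
      exact ⟨[], x, mid, s, rfl⟩
    · have hxs : ¬ xs.Nodup := fun hn => h (List.nodup_cons.mpr ⟨hx, hn⟩)
      obtain ⟨p, v, mid, s, rfl⟩ := ih hxs
      exact ⟨x :: p, v, mid, s, rfl⟩


lemma toPath (hs : H.Simple) : ∀ (n : ℕ) (l : List β), l.length ≤ n → POpen H D l →
    ∃ l', l'.head? = l.head? ∧ l'.getLast? = l.getLast? ∧ l'.Nodup ∧ POpen H D l' := by
  intro n
  induction n with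
  | zero =>
    intro l hlen hPO
    rw [Nat.le_zero, List.length_eq_zero_iff] at hlen
    subst hlen
    exact ⟨[], rfl, rfl, List.nodup_nil, hPO⟩
  | succ n ih =>
    intro l hlen hPO
    by_cases hnd : l.Nodup
    · exact ⟨l, rfl, rfl, hnd, hPO⟩
    · obtain ⟨p, v, mid, s, rfl⟩ := dup_decomp hnd
      obtain ⟨w, mid', rfl⟩ : ∃ w mid', mid = w :: mid' := by
        cases mid with
        | nil =>
          exfalso
          have hvv : [v, v] <:+: (p ++ v :: [] ++ v :: s) := ⟨p, s, by simp⟩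
          have hadj : H.adj v v := (List.isChain_cons_cons.mp (hPO.1.infix hvv)).1
          rcases hadj with h | h | h
          exacts [hs.1 v h, hs.1 v h, hs.2.1 v h]
        | cons w mid' => exact ⟨w, mid', rfl⟩
      obtain ⟨hch, htri, hnon⟩ := hPO
      -- the shortcut list
      have hpre : (p ++ [v]).Chain' H.adj :=
        hch.prefix ⟨(w :: mid') ++ v :: s, by simp⟩
      have hsuf : (v :: s).Chain' H.adj :=
        hch.suffix ⟨p ++ v :: (w :: mid'), by simp⟩
      have hch' : (p ++ v :: s).Chain' H.adj := by
        have h1 : ((p ++ [v]) ++ s).Chain' H.adj := by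
          apply List.isChain_append.mpr
          refine ⟨hpre, hsuf.tail, ?_⟩
          intro x hx y hy
          rw [List.getLast?_concat] at hx
          cases s with
          | nil => simp at hy
          | cons c s' =>
            simp only [List.head?_cons, Option.mem_some_iff] at hx hy
            subst hx; subst hy
            exact (List.isChain_cons_cons.mp hsuf).1
        simpa using h1
      have hmain : ∀ X Y Z, [X,Y,Z] <:+: (p ++ v :: s) →
          ([X,Y,Z] <:+: (p ++ v :: (w :: mid') ++ v :: s)) ∨
          ((H.triplex X Y Z → Y ∈ D ∪ H.san D) ∧
           (H.nontriplex X Y Z → Y ∈ D →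
             H.undir X Y ∧ H.undir Y Z ∧ ∃ q ∈ H.pa {Y}, q ∉ D)) := by
        intro X Y Z hinf
        rw [show p ++ v :: s = (p ++ [v]) ++ s by simp] at hinf
        rcases infix3_append hinf with h | h | ⟨⟨u, hu⟩, t, ht⟩ | ⟨⟨u, hu⟩, t, ht⟩
        · left
          have hpf : (p ++ [v]) <+: (p ++ v :: (w :: mid') ++ v :: s) :=
            ⟨(w :: mid') ++ v :: s, by simp⟩
          exact h.trans hpf.isInfix
        · left
          have hsf : (v :: s) <:+ (p ++ v :: (w :: mid') ++ v :: s) :=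
            ⟨p ++ v :: (w :: mid'), by simp⟩
          exact h.trans ((List.suffix_cons v s).trans hsf).isInfix
        · -- spanning with Y at the shortcut node
          right
          have hY : Y = v := by
            have h1 := congrArg List.getLast? hu
            rw [List.getLast?_concat,
              show u ++ [X, Y] = (u ++ [X]) ++ [Y] by simp, List.getLast?_concat] at h1
            exact (Option.some_inj.mp h1).symm
          have hp : p = u ++ [X] := by
            have h1 := congrArg List.dropLast hu
            rw [List.dropLast_concat,
              show u ++ [X, Y] = (u ++ [X]) ++ [Y] by simp, List.dropLast_concat] at h1
            exact h1
          rw [hY]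
          have hPO0 : POpen H D (p ++ v :: (w :: mid') ++ v :: s) := ⟨hch, htri, hnon⟩
          have hlv : p ++ v :: (w :: mid') ++ v :: s
              = u ++ [X] ++ v :: (w :: mid') ++ v :: Z :: t := by rw [hp, ht]
          rw [hlv] at hPO0
          exact central hs hPO0 (by simp)
        · -- triple sits inside v :: s
          left
          have hX : X = v := by
            have h1 := congrArg List.getLast? hu
            rw [List.getLast?_concat, List.getLast?_concat] at h1
            exact (Option.some_inj.mp h1).symm
          have h1 : [X, Y, Z] <:+: (v :: s) := by
            rw [← hX, ht]
            exact ⟨[], t, rfl⟩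
          have hsf : (v :: s) <:+ (p ++ v :: (w :: mid') ++ v :: s) :=
            ⟨p ++ v :: (w :: mid'), by simp⟩
          exact h1.trans hsf.isInfix
      have hPO' : POpen H D (p ++ v :: s) := by
        refine ⟨hch', ?_, ?_⟩
        · intro X Y Z hinf htr
          rcases hmain X Y Z hinf with h | h
          · exact htri X Y Z h htr
          · exact h.1 htr
        · intro X Y Z hinf hnt hYD
          rcases hmain X Y Z hinf with h | h
          · exact hnon X Y Z h hnt hYD
          · exact h.2 hnt hYD
      have hlen' : (p ++ v :: s).length ≤ n := by
        have := hlen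
        simp only [List.length_append, List.length_cons] at this ⊢
        omega
      obtain ⟨l', h1, h2, h3, h4⟩ := ih (p ++ v :: s) hlen' hPO'
      refine ⟨l', h1.trans ?_, h2.trans ?_, h3, h4⟩
      · cases p with
        | nil => simp
        | cons a p' => simp
      · obtain ⟨z, hz⟩ := Option.isSome_iff_exists.mp
          (List.getLast?_isSome.mpr (show v :: s ≠ [] by simp))
        rw [show p ++ v :: (w :: mid') ++ v :: s = (p ++ v :: (w :: mid')) ++ (v :: s) by simp,
          List.getLast?_append, List.getLast?_append, hz]
        rfl


lemma rconds_of_key {r r₀ : List β} (hr0 : RConds H D r₀)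
    (key : ∀ X Y Z, [X,Y,Z] <:+: r →
      (¬ H.triplex X Y Z ∧ Y ∉ D) ∨ (H.triplex X Y Z ∧ Y ∈ D) ∨ [X,Y,Z] <:+: r₀) :
    RConds H D r := by
  constructor
  · intro X Y Z h htr
    rcases key X Y Z h with ⟨h1, _⟩ | ⟨_, h2⟩ | h3
    · exact absurd htr h1
    · exact h2
    · exact hr0.1 X Y Z h3 htr
  · intro X Y Z h hnt
    rcases key X Y Z h with ⟨_, h2⟩ | ⟨h1, _⟩ | h3
    · exact h2
    · exact absurd h1 hnt.2.2
    · exact hr0.2 X Y Z h3 hnt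

lemma first_det (D : Set β) : ∀ (cs : List β) (B : β), B ∉ D → List.Chain H.dir B cs →
    (B :: cs).getLast (List.cons_ne_nil _ _) ∈ D →
    ∃ pre d, List.Chain H.dir B (pre ++ [d]) ∧ d ∈ D ∧ ∀ x ∈ B :: pre, x ∉ D := by
  intro cs
  induction cs with
  | nil =>
    intro B hB _ hlast
    simp [List.getLast] at hlast
    exact absurd hlast hB
  | cons c cs' ih =>
    intro B hB hch hlast
    obtain ⟨hBc, hch'⟩ := List.chain_cons.mp hch
    by_cases hc : c ∈ D
    · refine ⟨[], c, List.chain_cons.mpr ⟨hBc, List.Chain.nil⟩, hc, ?_⟩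
      intro x hx
      simp only [List.mem_singleton] at hx
      subst hx
      exact hB
    · have hlast' : (c :: cs').getLast (List.cons_ne_nil _ _) ∈ D := by
        rwa [List.getLast_cons (List.cons_ne_nil _ _)] at hlast
      obtain ⟨pre, d, h1, h2, h3⟩ := ih c hc hch' hlast'
      refine ⟨c :: pre, d, List.chain_cons.mpr ⟨hBc, h1⟩, h2, ?_⟩
      intro x hx
      rcases List.mem_cons.mp hx with rfl | hx'
      · exact hB
      · exact h3 x hx'

lemma spike_ok (hs : H.Simple) {A B C d : β} {pre rest : List β}
    (hr0ch : (B :: C :: rest).Chain' H.adj)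
    (hr0 : RConds H D (B :: C :: rest))
    (hadjAB : H.adj A B)
    (hchain : List.Chain H.dir B (pre ++ [d]))
    (hpreD : ∀ x ∈ B :: pre, x ∉ D)
    (hdD : d ∈ D) :
    ([A] ++ ((B :: pre) ++ [d]) ++ ((B :: pre).reverse ++ (C :: rest))).Chain' H.adj ∧
    RConds H D ([A] ++ ((B :: pre) ++ [d]) ++ ((B :: pre).reverse ++ (C :: rest))) := by
  have hmd : (B :: (pre ++ [d])).Chain' H.dir := hchain
  have hmdeq : (B :: pre) ++ [d] = B :: (pre ++ [d]) := by simp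
  have hmd' : ((B :: pre) ++ [d]).Chain' H.dir := by rw [hmdeq]; exact hmd
  have hmdir : (B :: pre).Chain' H.dir := hmd'.prefix ⟨[d], rfl⟩
  have hg : (B :: pre).getLast? = some ((B :: pre).getLast (List.cons_ne_nil _ _)) :=
    List.getLast?_eq_getLast _
  set g := (B :: pre).getLast (List.cons_ne_nil _ _) with hgdef
  have hgd : H.dir g d := (List.isChain_append.mp hmd').2.2 g hg d rfl
  have hadjBC : H.adj B C := (List.isChain_cons_cons.mp hr0ch).1
  constructor
  · -- the chain
    apply List.isChain_append.mpr
    refine ⟨?_, ?_, ?_⟩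
    · apply List.isChain_append.mpr
      refine ⟨List.isChain_singleton A, hmd'.imp (fun a b h => Or.inl h), ?_⟩
      intro x hx y hy
      simp only [List.getLast?_singleton, Option.mem_some_iff] at hx
      rw [List.head?_append] at hy
      simp only [List.head?_cons] at hy
      rw [show (some B).or (some d) = some B from rfl] at hy
      simp only [Option.mem_some_iff] at hy
      subst hx; subst hy
      exact hadjAB
    · apply List.isChain_append.mpr
      refine ⟨?_, hr0ch.tail, ?_⟩
      · rw [List.isChain_reverse]
        exact hmdir.imp (fun a b h => Or.inr (Or.inl h))
      · intro x hx y hy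
        rw [List.getLast?_reverse] at hx
        simp only [List.head?_cons, Option.mem_some_iff] at hx hy
        subst hx; subst hy
        exact hadjBC
    · intro x hx y hy
      have hx' : x = d := by
        rw [show [A] ++ ((B :: pre) ++ [d]) = ([A] ++ (B :: pre)) ++ [d] by simp,
          List.getLast?_concat] at hx
        exact (Option.mem_some_iff.mp hx).symm
      have hy' : y = g := by
        rw [List.head?_append, List.head?_reverse, hg,
          show (some g).or ((C :: rest).head?) = some g from rfl] at hy
        exact (Option.mem_some_iff.mp hy).symm
      subst hx'; subst hy'
      exact Or.inr (Or.inl hgd)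
  · -- route conditions
    apply rconds_of_key hr0
    intro X Y Z h
    rcases infix3_append h with h | h | ⟨⟨u, hu⟩, t, ht⟩ | ⟨⟨u, hu⟩, t, ht⟩
    · -- within A :: ((B :: pre) ++ [d])
      rw [show [A] ++ ((B :: pre) ++ [d]) = A :: ((B :: pre) ++ [d]) from rfl,
        List.infix_cons_iff] at h
      rcases h with h | h
      · obtain ⟨rfl, h2⟩ := List.cons_prefix_cons.mp h
        rw [List.cons_append] at h2
        obtain ⟨rfl, h3⟩ := List.cons_prefix_cons.mp h2
        obtain ⟨t', ht'⟩ := h3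
        have hdirYZ : H.dir Y Z := by
          have hc := hchain
          rw [← ht'] at hc
          exact (List.chain_cons.mp hc).1
        exact Or.inl ⟨not_triplex_out hs hdirYZ, hpreD Y (List.mem_cons_self)⟩
      · obtain ⟨u, t, hut⟩ := h
        have hc3 := hmd'.infix ⟨u, t, hut⟩
        have hdirXY : H.dir X Y := (List.isChain_cons_cons.mp hc3).1
        have hdirYZ : H.dir Y Z := (List.isChain_cons_cons.mp (List.isChain_cons_cons.mp hc3).2).1
        have h2 : (u ++ [X,Y]) ++ (Z :: t) = (B :: pre) ++ [d] := by
          rw [← hut]; simp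
        have h3 := congrArg List.dropLast h2
        rw [List.dropLast_append_of_ne_nil (by simp), List.dropLast_concat] at h3
        have hYm : Y ∈ B :: pre := by
          rw [← h3]
          simp
        exact Or.inl ⟨not_triplex_out hs hdirYZ, hpreD Y hYm⟩
    · -- within (B :: pre).reverse ++ (C :: rest)
      rcases infix3_append h with h | h | ⟨⟨u, hu⟩, t, ht⟩ | ⟨⟨u, hu⟩, t, ht⟩
      · have hrp : [Z,Y,X] <:+: (B :: pre) := by
          rw [← List.reverse_infix]
          simpa using h
        have hc3 := hmdir.infix hrp
        have hdirYX : H.dir Y X := (List.isChain_cons_cons.mp (List.isChain_cons_cons.mp hc3).2).1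
        exact Or.inl ⟨not_triplex_in hs hdirYX, hpreD Y (hrp.subset (by simp))⟩
      · exact Or.inr (Or.inr (h.trans (List.suffix_cons B (C :: rest)).isInfix))
      · -- (B::pre).reverse = u ++ [X,Y], C :: rest = Z :: t
        have hm2 : B :: pre = Y :: X :: u.reverse := by
          have e := congrArg List.reverse hu
          rw [List.reverse_reverse] at e
          simpa using e
        injection hm2 with h1 h2
        have hdirYX : H.dir Y X := by
          have hc := hchain
          rw [h2] at hc
          rw [List.cons_append] at hc
          exact h1 ▸ (List.chain_cons.mp hc).1
        refine Or.inl ⟨not_triplex_in hs hdirYX, ?_⟩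
        rw [← h1]
        exact hpreD B (List.mem_cons_self)
      · -- (B::pre).reverse = u ++ [X], C :: rest = Y :: Z :: t
        have hX : X = B := by
          have e := congrArg List.getLast? hu
          rw [List.getLast?_reverse, List.getLast?_concat] at e
          simpa using e.symm
        injection ht with h1 h2
        refine Or.inr (Or.inr ⟨[], t, ?_⟩)
        simp only [List.nil_append]
        rw [hX, ← h1, h2]
        simp
    · -- outer span: [A] ++ ((B::pre) ++ [d]) = u ++ [X,Y]
      have hY : Y = d := by
        have e := congrArg List.getLast? hu
        rw [show [A] ++ ((B :: pre) ++ [d]) = ([A] ++ (B :: pre)) ++ [d] by simp,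
          List.getLast?_concat,
          show u ++ [X,Y] = (u ++ [X]) ++ [Y] by simp, List.getLast?_concat] at e
        exact (Option.some_inj.mp e).symm
      have hX : X = g := by
        have e := congrArg List.dropLast hu
        rw [show [A] ++ ((B :: pre) ++ [d]) = ([A] ++ (B :: pre)) ++ [d] by simp,
          List.dropLast_concat,
          show u ++ [X,Y] = (u ++ [X]) ++ [Y] by simp, List.dropLast_concat] at e
        have e2 := congrArg List.getLast? e
        rw [List.getLast?_append, hg, show (some g).or ([A].getLast?) = some g from rfl,
          List.getLast?_concat] at e2
        exact (Option.some_inj.mp e2).symm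
      have hZ : Z = g := by
        have e := congrArg List.head? ht
        rw [List.head?_append, List.head?_reverse, hg,
          show (some g).or ((C :: rest).head?) = some g from rfl] at e
        simp only [List.head?_cons] at e
        exact (Option.some_inj.mp e).symm
      refine Or.inr (Or.inl ⟨Or.inl ⟨?_, ?_⟩, ?_⟩)
      · rw [hX, hY]; exact hgd
      · rw [hZ, hY]; exact hgd
      · rw [hY]; exact hdD
    · -- outer span: [A] ++ ((B::pre) ++ [d]) = u ++ [X]
      have hX : X = d := by
        have e := congrArg List.getLast? hu
        rw [show [A] ++ ((B :: pre) ++ [d]) = ([A] ++ (B :: pre)) ++ [d] by simp,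
          List.getLast?_concat, List.getLast?_concat] at e
        exact (Option.some_inj.mp e).symm
      have hY : Y = g := by
        have e := congrArg List.head? ht
        rw [List.head?_append, List.head?_reverse, hg,
          show (some g).or ((C :: rest).head?) = some g from rfl] at e
        simp only [List.head?_cons] at e
        exact (Option.some_inj.mp e).symm
      have hdirYX : H.dir Y X := by rw [hY, hX]; exact hgd
      refine Or.inl ⟨not_triplex_in hs hdirYX, ?_⟩
      rw [hY]
      exact hpreD g (List.getLast_mem _)


lemma toRoute (hs : H.Simple) : ∀ (t : List β) (A B : β),
    POpen H D (A :: B :: t) →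
    ∃ r t'', r = A :: B :: t'' ∧ r.Chain' H.adj ∧ RConds H D r ∧
      r.getLast? = (A :: B :: t).getLast? := by
  intro t
  induction t with
  | nil =>
    intro A B hPO
    refine ⟨[A, B], [], rfl, hPO.1, ⟨?_, ?_⟩, rfl⟩ <;>
      · intro X Y Z h _
        have := h.length_le
        simp at this
  | cons C t' ih =>
    intro A B hPO
    have hPO' : POpen H D (B :: C :: t') := by
      refine ⟨hPO.1.tail, ?_, ?_⟩
      · intro X Y Z h ht
        exact hPO.2.1 X Y Z (h.trans (List.suffix_cons A _).isInfix) ht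
      · intro X Y Z h hnt hYD
        exact hPO.2.2 X Y Z (h.trans (List.suffix_cons A _).isInfix) hnt hYD
    obtain ⟨r₀, t₀, hr₀eq, hr₀ch, hr₀c, hr₀last⟩ := ih B C hPO'
    have hT : [A,B,C] <:+: (A :: B :: C :: t') := ⟨[], t', rfl⟩
    have hadjAB : H.adj A B := (List.isChain_cons_cons.mp hPO.1).1
    have hadjBC : H.adj B C := (List.isChain_cons_cons.mp hPO.1.tail).1
    subst hr₀eq
    have cons_key : ∀ {X Y Z : β}, [X,Y,Z] <:+: (A :: B :: C :: t₀) →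
        (X = A ∧ Y = B ∧ Z = C) ∨ [X,Y,Z] <:+: (B :: C :: t₀) := by
      intro X Y Z h
      rw [List.infix_cons_iff] at h
      rcases h with h | h
      · obtain ⟨rfl, h2⟩ := List.cons_prefix_cons.mp h
        obtain ⟨rfl, h3⟩ := List.cons_prefix_cons.mp h2
        obtain ⟨rfl, _⟩ := List.cons_prefix_cons.mp h3
        exact Or.inl ⟨rfl, rfl, rfl⟩
      · exact Or.inr h
    by_cases htr : H.triplex A B C
    · rcases hPO.2.1 A B C hT htr with hBD | hBsan
      · -- B is determined: keep the triple
        refine ⟨A :: B :: C :: t₀, C :: t₀, rfl,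
          List.isChain_cons_cons.mpr ⟨hadjAB, hr₀ch⟩, ⟨?_, ?_⟩, ?_⟩
        · intro X Y Z h ht
          rcases cons_key h with ⟨rfl, rfl, rfl⟩ | h'
          · exact hBD
          · exact hr₀c.1 _ _ _ h' ht
        · intro X Y Z h hnt
          rcases cons_key h with ⟨rfl, rfl, rfl⟩ | h'
          · exact absurd htr hnt.2.2
          · exact hr₀c.2 _ _ _ h' hnt
        · simp only [List.getLast?_cons_cons] at hr₀last ⊢
          exact hr₀last
      · -- B ∈ san D: splice in a descending spike
        have hBD : B ∉ D := hBsan.1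
        obtain ⟨d₀, hd₀D, htg⟩ := hBsan.2
        obtain ⟨cs, hchain₀, hlast₀⟩ :=
          List.exists_isChain_cons_of_relationReflTransGen htg.to_reflTransGen
        have hlast₀' : (B :: cs).getLast (List.cons_ne_nil _ _) ∈ D := by
          rw [show (B :: cs).getLast (List.cons_ne_nil _ _) = d₀ from hlast₀]
          exact hd₀D
        obtain ⟨pre, d, hch2, hdD, hpreD⟩ := first_det D cs B hBD hchain₀ hlast₀'
        obtain ⟨hchr, hrc⟩ := spike_ok hs hr₀ch hr₀c hadjAB hch2 hpreD hdD
        refine ⟨[A] ++ ((B :: pre) ++ [d]) ++ ((B :: pre).reverse ++ (C :: t₀)),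
          pre ++ [d] ++ ((B :: pre).reverse ++ (C :: t₀)), by simp, hchr, hrc, ?_⟩
        obtain ⟨z, hz⟩ := Option.isSome_iff_exists.mp
          (List.getLast?_isSome.mpr (show (C :: t₀) ≠ [] by simp))
        have hgl : ([A] ++ ((B :: pre) ++ [d]) ++
            ((B :: pre).reverse ++ (C :: t₀))).getLast? = some z := by
          rw [List.getLast?_append, List.getLast?_append, hz]
          rfl
        rw [hgl]
        simp only [List.getLast?_cons_cons] at hr₀last ⊢
        rw [← hr₀last]
        exact hz.symm
    · -- A-B-C is a non-triplex
      have hnt : H.nontriplex A B C := ⟨hadjAB, hadjBC, htr⟩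
      by_cases hBD : B ∈ D
      · obtain ⟨hAB, hBC, q, hq, hqD⟩ := hPO.2.2 A B C hT hnt hBD
        obtain ⟨hqB, x, hx, hdirqB'⟩ := hq
        rw [Set.mem_singleton_iff] at hx
        have hdirqB : H.dir q B := hx ▸ hdirqB'
        have hkey : ∀ X Y Z, [X,Y,Z] <:+: ([A, B, q] ++ (B :: C :: t₀)) →
            (¬ H.triplex X Y Z ∧ Y ∉ D) ∨ (H.triplex X Y Z ∧ Y ∈ D) ∨
            [X,Y,Z] <:+: (B :: C :: t₀) := by
          intro X Y Z h
          rcases infix3_append h with h | h | ⟨⟨u, hu⟩, t2, ht2⟩ | ⟨⟨u, hu⟩, t2, ht2⟩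
          · obtain ⟨u, t2, hut⟩ := h
            have hlen := congrArg List.length hut
            simp only [List.length_append, List.length_cons, List.length_nil] at hlen
            have hu0 : u = [] := List.length_eq_zero_iff.mp (by omega)
            have ht0 : t2 = [] := List.length_eq_zero_iff.mp (by omega)
            subst hu0; subst ht0
            simp only [List.nil_append, List.append_nil] at hut
            injection hut with e1 hut; injection hut with e2 hut; injection hut with e3 _
            subst e1; subst e2; subst e3
            exact Or.inr (Or.inl ⟨Or.inr (Or.inr ⟨hAB, hdirqB⟩), hBD⟩)
          · exact Or.inr (Or.inr h)
          · have hY : Y = q := by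
              have e := congrArg List.getLast? hu
              rw [show u ++ [X,Y] = (u ++ [X]) ++ [Y] by simp, List.getLast?_concat] at e
              simpa using e.symm
            have hX : X = B := by
              have e := congrArg List.dropLast hu
              rw [show u ++ [X,Y] = (u ++ [X]) ++ [Y] by simp, List.dropLast_concat] at e
              have e2 := congrArg List.getLast? e
              rw [List.getLast?_concat] at e2
              simpa using e2.symm
            subst hY; subst hX
            exact Or.inl ⟨not_triplex_in hs hdirqB, hqD⟩
          · have hX : X = q := by
              have e := congrArg List.getLast? hu
              rw [List.getLast?_concat] at e
              simpa using e.symm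
            injection ht2 with e1 ht2; injection ht2 with e2 _
            subst hX
            refine Or.inr (Or.inl ⟨Or.inr (Or.inl ⟨?_, ?_⟩), ?_⟩)
            · rw [← e1]; exact hdirqB
            · rw [← e1, ← e2]; exact hBC
            · rw [← e1]; exact hBD
        refine ⟨[A, B, q] ++ (B :: C :: t₀), q :: B :: C :: t₀, rfl, ?_,
          rconds_of_key hr₀c hkey, ?_⟩
        · apply List.isChain_append.mpr
          refine ⟨?_, hr₀ch, ?_⟩
          · exact List.isChain_cons_cons.mpr ⟨hadjAB,
              List.isChain_cons_cons.mpr ⟨Or.inr (Or.inl hdirqB), List.isChain_singleton q⟩⟩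
          · intro x hx y hy
            rw [show ([A, B, q] : List β).getLast? = some q from rfl] at hx
            rw [show (B :: C :: t₀).head? = some B from rfl] at hy
            simp only [Option.mem_some_iff] at hx hy
            rw [← hx, ← hy]
            exact Or.inl hdirqB
        · obtain ⟨z, hz⟩ := Option.isSome_iff_exists.mp
            (List.getLast?_isSome.mpr (show (B :: C :: t₀) ≠ [] by simp))
          rw [List.getLast?_append, hz, show (some z).or (([A,B,q] : List β).getLast?)
            = some z from rfl]
          simp only [List.getLast?_cons_cons] at hr₀last hz ⊢
          rw [← hr₀last]
          exact hz.symm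
      · -- B not determined: keep the non-triplex
        refine ⟨A :: B :: C :: t₀, C :: t₀, rfl,
          List.isChain_cons_cons.mpr ⟨hadjAB, hr₀ch⟩, ⟨?_, ?_⟩, ?_⟩
        · intro X Y Z h ht
          rcases cons_key h with ⟨rfl, rfl, rfl⟩ | h'
          · exact absurd ht htr
          · exact hr₀c.1 _ _ _ h' ht
        · intro X Y Z h hnt2
          rcases cons_key h with ⟨rfl, rfl, rfl⟩ | h'
          · exact hBD
          · exact hr₀c.2 _ _ _ h' hnt2
        · simp only [List.getLast?_cons_cons] at hr₀last ⊢
          exact hr₀last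


end MixedGraph

/-- the route-based and path-based definitions of AMP separation
coincide: there is a D-open route between `a` and `b` iff there is a D-open
path between `a` and `b`. -/
theorem stmt14 {β : Type*} (H : MixedGraph β) (hH : H.IsChainGraph)
    (D : Set β) (a b : β) (ha : a ∉ D) (hb : b ∉ D) :
    (∃ l, l.head? = some a ∧ l.getLast? = some b ∧ H.AMPOpenRoute D l) ↔
    (∃ l, l.head? = some a ∧ l.getLast? = some b ∧ H.AMPOpenPath D l) := by
  have hs := hH.1
  constructor
  · rintro ⟨l, hhead, hlast, ⟨⟨hne, hch⟩, htri, hnon⟩⟩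
    have hPO : MixedGraph.POpen H D l :=
      ⟨hch, fun X Y Z h ht => Or.inl (htri X Y Z h ht),
       fun X Y Z h hnt hYD => absurd hYD (hnon X Y Z h hnt)⟩
    obtain ⟨l', h1, h2, h3, h4⟩ := MixedGraph.toPath hs l.length l le_rfl hPO
    refine ⟨l', h1.trans hhead, h2.trans hlast, ⟨⟨?_, h4.1⟩, h3, h4.2.1, h4.2.2⟩⟩
    intro he
    rw [he, hhead] at h1
    simp at h1
  · rintro ⟨l, hhead, hlast, ⟨⟨hne, hch⟩, hnd, htri, hnon⟩⟩
    cases l with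
    | nil => exact absurd hhead (by simp)
    | cons x l1 =>
      cases l1 with
      | nil =>
        refine ⟨[x], hhead, hlast, ⟨⟨by simp, List.isChain_singleton x⟩, ?_, ?_⟩⟩ <;>
          · intro X Y Z h _
            have := h.length_le
            simp at this
      | cons y t =>
        have hPO : MixedGraph.POpen H D (x :: y :: t) := ⟨hch, htri, hnon⟩
        obtain ⟨r, t'', hre, hrch, hrc, hrlast⟩ := MixedGraph.toRoute hs t x y hPO
        refine ⟨r, ?_, hrlast.trans hlast, ⟨⟨?_, hrch⟩, hrc.1, hrc.2⟩⟩
        · rw [hre]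
          exact hhead
        · rw [hre]
          simp
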